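/- arXiv:2503.22457 — 2 statements merged into one kernel-verified Lean document; each statement's English description precedes it below -/
import Mathlib

section
/- Let Γ be a countable discrete abelian group, X and Y finite-dimensional complex Hilbert spaces, ρ : Γ → U(X) a unitary representation, h ∈ AP(Γ, X), and let C : ℓ∞(Γ, X) → ℓ∞(Γ, Y) be a bounded linear operator which is an intertwiner for the representations π_{X,ρ} and π_Y, i.e. C ∘ π_{X,ρ}(γ) = π_Y(γ) ∘ C for all γ ∈ Γ. Then C(T_ρ h) = 0 if and only if C(T_ρ(χ⊗ĥ(χ))) = 0 for every χ ∈ Γ̂. -/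
set_option linter.unusedSectionVars false
set_option linter.unusedVariables false
set_option maxHeartbeats 1000000


open Filter BoundedContinuousFunction

/-- A character of the discrete abelian group `Γ`. -/
def IsChar {Γ : Type*} [AddCommGroup Γ] (χ : Γ → ℂ) : Prop :=
  (∀ γ γ' : Γ, χ (γ + γ') = χ γ * χ γ') ∧ ∀ γ : Γ, ‖χ γ‖ = 1

/-- An `X`-valued trigonometric polynomial on `Γ`. -/
def IsTrigPoly {Γ X : Type*} [AddCommGroup Γ] [NormedAddCommGroup X] [Module ℂ X]
    (p : Γ → X) : Prop :=
  ∃ (n : ℕ) (χ : Fin n → Γ → ℂ) (a : Fin n → X),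
    (∀ k, IsChar (χ k)) ∧ ∀ γ, p γ = ∑ k, χ k γ • a k

/-- An almost periodic `X`-valued function on `Γ`. -/
def IsAP {Γ X : Type*} [AddCommGroup Γ] [NormedAddCommGroup X] [Module ℂ X]
    (h : Γ → X) : Prop :=
  ∀ ε : ℝ, 0 < ε → ∃ p : Γ → X, IsTrigPoly p ∧ ∀ γ, ‖h γ - p γ‖ < ε

/-- A Bohr–Bochner sequence for `Γ`. -/
def IsBohrBochner {Γ : Type*} [AddCommGroup Γ] [DecidableEq Γ] (H : ℕ → Finset Γ) : Prop :=
  Monotone H ∧ (∀ γ : Γ, ∃ n, γ ∈ H n) ∧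
    ∀ γ : Γ, Tendsto
      (fun n => (((H n).filter fun x => γ + x ∉ H n).card : ℝ) / ((H n).card : ℝ))
      atTop (nhds 0)

section Char

variable {Γ : Type*} [AddCommGroup Γ] [DecidableEq Γ]

variable {χ : Γ → ℂ}

lemma IsChar.ne_zero (hχ : IsChar χ) (γ : Γ) : χ γ ≠ 0 := by
  intro h0
  have := hχ.2 γ
  rw [h0] at this; simp at this

lemma IsChar.mul_conj (hχ : IsChar χ) (γ : Γ) : χ γ * (starRingEnd ℂ) (χ γ) = 1 := by
  rw [Complex.mul_conj]
  have : ‖χ γ‖ = 1 := by exact hχ.2 γ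
  rw [Complex.normSq_eq_norm_sq, this]; norm_num

lemma IsChar.map_zero (hχ : IsChar χ) : χ 0 = 1 := by
  have h := hχ.1 0 0
  rw [add_zero] at h
  exact (mul_left_cancel₀ (hχ.ne_zero 0) (by rw [mul_one]; exact h)).symm

lemma IsChar.map_neg (hχ : IsChar χ) (γ : Γ) : χ (-γ) = (starRingEnd ℂ) (χ γ) := by
  have h : χ γ * χ (-γ) = 1 := by rw [← hχ.1]; simp [hχ.map_zero]
  have h2 := hχ.mul_conj γ
  exact mul_left_cancel₀ (hχ.ne_zero γ) (h.trans h2.symm)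

lemma IsChar.map_sub (hχ : IsChar χ) (t γ : Γ) : χ (t - γ) = χ t * (starRingEnd ℂ) (χ γ) := by
  rw [sub_eq_add_neg, hχ.1, hχ.map_neg]

lemma IsChar.conj (hχ : IsChar χ) : IsChar (fun γ => (starRingEnd ℂ) (χ γ)) := by
  refine ⟨fun γ γ' => ?_, fun γ => ?_⟩
  · show (starRingEnd ℂ) (χ (γ + γ')) = _
    rw [hχ.1, map_mul]
  · show ‖(starRingEnd ℂ) (χ γ)‖ = 1
    rw [RCLike.norm_conj]; exact hχ.2 γ

lemma IsChar.mul (hχ : IsChar χ) {χ' : Γ → ℂ} (hχ' : IsChar χ') : IsChar (fun γ => χ γ * χ' γ) := by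
  refine ⟨fun γ γ' => ?_, fun γ => ?_⟩
  · show χ (γ + γ') * χ' (γ + γ') = _
    rw [hχ.1, hχ'.1]; ring
  · show ‖χ γ * χ' γ‖ = 1
    rw [norm_mul, hχ.2, hχ'.2]; norm_num

end Char

namespace APProof

open Finset

variable {Γ : Type*} [AddCommGroup Γ] [DecidableEq Γ]
variable {V : Type*} [NormedAddCommGroup V] [NormedSpace ℂ V]

noncomputable def avg (W : Finset Γ) (F : Γ → V) : V :=
  ((W.card : ℂ))⁻¹ • ∑ γ ∈ W, F γ

section Avg

lemma norm_avg_le (W : Finset Γ) (F : Γ → V) {M : ℝ} (hM : 0 ≤ M)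
    (hF : ∀ γ ∈ W, ‖F γ‖ ≤ M) : ‖avg W F‖ ≤ M := by
  unfold avg
  rw [norm_smul]
  have h1 : ‖((W.card : ℂ))⁻¹‖ = ((W.card : ℝ))⁻¹ := by
    simp [norm_inv]
  rw [h1]
  have h2 : ‖∑ γ ∈ W, F γ‖ ≤ (W.card : ℝ) * M := by
    calc ‖∑ γ ∈ W, F γ‖ ≤ ∑ γ ∈ W, ‖F γ‖ := norm_sum_le _ _
    _ ≤ ∑ _γ ∈ W, M := Finset.sum_le_sum hF
    _ = (W.card : ℝ) * M := by rw [Finset.sum_const, nsmul_eq_mul]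
  rcases Nat.eq_zero_or_pos W.card with hc | hc
  · simp [hc, hM]
  · have hc' : (0:ℝ) < (W.card : ℝ) := by exact_mod_cast hc
    calc ((W.card:ℝ))⁻¹ * ‖∑ γ ∈ W, F γ‖ ≤ ((W.card:ℝ))⁻¹ * ((W.card : ℝ) * M) := by
          exact mul_le_mul_of_nonneg_left h2 (by positivity)
    _ = M := by field_simp

lemma avg_sub (W : Finset Γ) (F G : Γ → V) :
    avg W (fun γ => F γ - G γ) = avg W F - avg W G := by
  unfold avg
  rw [Finset.sum_sub_distrib, smul_sub]

lemma avg_sum (W : Finset Γ) {ι : Type*} (s : Finset ι) (F : ι → Γ → V) :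
    avg W (fun γ => ∑ k ∈ s, F k γ) = ∑ k ∈ s, avg W (F k) := by
  unfold avg
  rw [Finset.sum_comm, Finset.smul_sum]

lemma avg_smul_fun (W : Finset Γ) (f : Γ → ℂ) (v : V) :
    avg W (fun γ => f γ • v) = (avg W f) • v := by
  unfold avg
  rw [← Finset.sum_smul, smul_assoc]

lemma avg_const_smul (W : Finset Γ) (c : ℂ) (F : Γ → V) :
    avg W (fun γ => c • F γ) = c • avg W F := by
  unfold avg
  rw [← Finset.smul_sum, smul_comm]

lemma avg_one {W : Finset Γ} (hW : W.Nonempty) : avg W (fun _ => (1:ℂ)) = 1 := by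
  unfold avg
  rw [Finset.sum_const, nsmul_eq_mul, mul_one, smul_eq_mul]
  have : (W.card : ℂ) ≠ 0 := by
    exact_mod_cast Nat.cast_ne_zero.2 (Finset.card_ne_zero_of_mem hW.choose_spec)
  field_simp

lemma norm_sum_le_of_avg {W : Finset Γ} {F : Γ → V} {δ : ℝ} (hδ : 0 ≤ δ)
    (h : ‖avg W F‖ ≤ δ) : ‖∑ γ ∈ W, F γ‖ ≤ (W.card : ℝ) * δ := by
  rcases Nat.eq_zero_or_pos W.card with hc | hc
  · rw [Finset.card_eq_zero] at hc
    simp [hc, hδ]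
  · have hc' : ((W.card : ℂ)) ≠ 0 := by exact_mod_cast Nat.pos_iff_ne_zero.1 hc
    have : ∑ γ ∈ W, F γ = (W.card : ℂ) • avg W F := by
      unfold avg; rw [smul_smul]; field_simp; rw [one_smul]
    rw [this, norm_smul]
    have : ‖((W.card : ℂ))‖ = (W.card : ℝ) := by simp
    rw [this]
    exact mul_le_mul_of_nonneg_left h (by positivity)

end Avg

end APProof

-- restore defs needed below
namespace APProof

open Finset Filter

section Folner

variable {Γ : Type*} [AddCommGroup Γ] [DecidableEq Γ]
variable {H : ℕ → Finset Γ}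

/-- key combinatorial estimate -/
lemma sum_char_translate_bound {χ : Γ → ℂ} (hχ : IsChar χ) (W : Finset Γ) (γ0 : Γ) :
    ‖χ γ0 * (∑ γ ∈ W, χ γ) - ∑ γ ∈ W, χ γ‖ ≤
      2 * ((W.filter fun x => γ0 + x ∉ W).card : ℝ) := by
  classical
  set A : Finset Γ := W.image (γ0 + ·) with hA
  have hinj : Function.Injective (γ0 + ·) := fun a b hab => by simpa using hab
  have h1 : χ γ0 * (∑ γ ∈ W, χ γ) = ∑ x ∈ A, χ x := by
    rw [Finset.mul_sum, hA, Finset.sum_image (fun x _ y _ h => hinj h)]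
    exact Finset.sum_congr rfl (fun x _ => (hχ.1 γ0 x).symm)
  have hsplitA : ∑ x ∈ A, χ x = ∑ x ∈ A ∩ W, χ x + ∑ x ∈ A \ W, χ x :=
    (Finset.sum_inter_add_sum_sdiff A W χ).symm
  have hsplitW : ∑ x ∈ W, χ x = ∑ x ∈ A ∩ W, χ x + ∑ x ∈ W \ A, χ x := by
    rw [Finset.inter_comm]
    exact (Finset.sum_inter_add_sum_sdiff W A χ).symm
  have hdiff : χ γ0 * (∑ γ ∈ W, χ γ) - ∑ γ ∈ W, χ γ
      = ∑ x ∈ A \ W, χ x - ∑ x ∈ W \ A, χ x := by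
    rw [h1, hsplitA, hsplitW]; ring
  have hbound : ∀ (S : Finset Γ), ‖∑ x ∈ S, χ x‖ ≤ (S.card : ℝ) := by
    intro S
    calc ‖∑ x ∈ S, χ x‖ ≤ ∑ x ∈ S, ‖χ x‖ := norm_sum_le _ _
    _ = (S.card : ℝ) := by
        rw [Finset.sum_congr rfl (fun x _ => hχ.2 x), Finset.sum_const, nsmul_eq_mul, mul_one]
  have hcardAW : (A \ W).card = (W.filter fun x => γ0 + x ∉ W).card := by
    have : A \ W = (W.filter fun x => γ0 + x ∉ W).image (γ0 + ·) := by
      ext z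
      simp only [Finset.mem_sdiff, hA, Finset.mem_image, Finset.mem_filter]
      constructor
      · rintro ⟨⟨x, hx, rfl⟩, hz⟩; exact ⟨x, ⟨hx, hz⟩, rfl⟩
      · rintro ⟨x, ⟨hx, hz⟩, rfl⟩; exact ⟨⟨x, hx, rfl⟩, hz⟩
    rw [this, Finset.card_image_of_injective _ hinj]
  have hcardWA : (W \ A).card = (A \ W).card := by
    have e1 : (W \ A).card + (W ∩ A).card = W.card := Finset.card_sdiff_add_card_inter W A
    have e2 : (A \ W).card + (A ∩ W).card = A.card := Finset.card_sdiff_add_card_inter A W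
    have e3 : A.card = W.card := Finset.card_image_of_injective _ hinj
    rw [Finset.inter_comm] at e2
    omega
  calc ‖χ γ0 * (∑ γ ∈ W, χ γ) - ∑ γ ∈ W, χ γ‖
      = ‖∑ x ∈ A \ W, χ x - ∑ x ∈ W \ A, χ x‖ := by rw [hdiff]
    _ ≤ ‖∑ x ∈ A \ W, χ x‖ + ‖∑ x ∈ W \ A, χ x‖ := norm_sub_le _ _
    _ ≤ ((A \ W).card : ℝ) + ((W \ A).card : ℝ) := add_le_add (hbound _) (hbound _)
    _ = 2 * ((W.filter fun x => γ0 + x ∉ W).card : ℝ) := by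
        rw [hcardWA, hcardAW]; ring

lemma char_avg_tendsto_zero (hH : IsBohrBochner H) {χ : Γ → ℂ} (hχ : IsChar χ)
    {γ0 : Γ} (h1 : χ γ0 ≠ 1) :
    Tendsto (fun n => avg (H n) χ) atTop (nhds 0) := by
  set c : ℝ := ‖χ γ0 - 1‖ with hc
  have hcpos : 0 < c := by
    rw [hc, norm_pos_iff, sub_ne_zero]; exact h1
  have key : ∀ n, ‖avg (H n) χ‖ ≤
      (2 / c) * ((((H n).filter fun x => γ0 + x ∉ H n).card : ℝ) / ((H n).card : ℝ)) := by
    intro n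
    set W := H n
    set S := ∑ γ ∈ W, χ γ with hS
    set k : ℝ := ((W.filter fun x => γ0 + x ∉ W).card : ℝ) with hk
    have hk0 : 0 ≤ k := by positivity
    have hSb : c * ‖S‖ ≤ 2 * k := by
      have := sum_char_translate_bound hχ W γ0
      calc c * ‖S‖ = ‖(χ γ0 - 1) * S‖ := by rw [norm_mul, hc]
      _ = ‖χ γ0 * S - S‖ := by ring_nf
      _ ≤ 2 * k := this
    have hSb' : ‖S‖ ≤ 2 * k / c := by
      rw [le_div_iff₀ hcpos]; linarith [hSb]
    have : ‖avg W χ‖ = ((W.card : ℝ))⁻¹ * ‖S‖ := by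
      unfold avg
      rw [norm_smul]
      congr 1
      simp [norm_inv]
    rw [this]
    calc ((W.card : ℝ))⁻¹ * ‖S‖ ≤ ((W.card : ℝ))⁻¹ * (2 * k / c) := by
          exact mul_le_mul_of_nonneg_left hSb' (by positivity)
    _ = (2 / c) * (k / (W.card : ℝ)) := by ring
  have htend : Tendsto (fun n => (2 / c) *
      ((((H n).filter fun x => γ0 + x ∉ H n).card : ℝ) / ((H n).card : ℝ))) atTop (nhds 0) := by
    have := (hH.2.2 γ0).const_mul (2 / c)
    simpa using this
  exact tendsto_zero_iff_norm_tendsto_zero.2 (squeeze_zero (fun n => norm_nonneg _) key htend)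

lemma eventually_nonempty (hH : IsBohrBochner H) : ∀ᶠ n in atTop, (H n).Nonempty := by
  obtain ⟨n0, hn0⟩ := hH.2.1 0
  refine eventually_atTop.2 ⟨n0, fun n hn => ⟨0, hH.1 hn hn0⟩⟩

open scoped Classical in
lemma char_avg_tendsto (hH : IsBohrBochner H) {χ : Γ → ℂ} (hχ : IsChar χ) :
    Tendsto (fun n => avg (H n) χ) atTop
      (nhds (if ∀ γ, χ γ = 1 then 1 else 0)) := by
  classical
  by_cases htriv : ∀ γ, χ γ = 1
  · rw [if_pos htriv]
    have : ∀ᶠ n in atTop, avg (H n) χ = 1 := by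
      filter_upwards [eventually_nonempty hH] with n hn
      have : χ = fun _ => (1:ℂ) := funext htriv
      rw [this]
      exact avg_one hn
    exact Tendsto.congr' (by filter_upwards [this] with n hn using hn.symm) tendsto_const_nhds
  · rw [if_neg htriv]
    push_neg at htriv
    obtain ⟨γ0, h1⟩ := htriv
    exact char_avg_tendsto_zero hH hχ h1

end Folner

end APProof

namespace APProof

open Finset Filter

section Core

variable {Γ : Type*} [AddCommGroup Γ] [DecidableEq Γ]
variable {V : Type*} [NormedAddCommGroup V] [NormedSpace ℂ V]
variable {H : ℕ → Finset Γ}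

open scoped Classical in
lemma core_uniform (hH : IsBohrBochner H) {χ : Γ → ℂ} (hχ : IsChar χ)
    {h : Γ → V} (hAP : IsAP h) {b : V}
    (htend : Tendsto (fun n => avg (H n) (fun γ => (starRingEnd ℂ) (χ γ) • h γ))
      atTop (nhds b)) {ε : ℝ} (hε : 0 < ε) :
    ∀ᶠ n in atTop, ∀ t : Γ,
      ‖avg (H n) (fun γ => (starRingEnd ℂ) (χ (t - γ)) • h (t - γ)) - b‖ ≤ ε := by
  obtain ⟨P, ⟨m, χk, ak, hk, hPeq⟩, hhP⟩ := hAP (ε/8) (by positivity)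
  set η : Fin m → Γ → ℂ := fun k s => (starRingEnd ℂ) (χ s) * χk k s with hη
  have hηchar : ∀ k, IsChar (η k) := fun k => (hχ.conj).mul (hk k)
  have hη_norm : ∀ k t, ‖η k t‖ = 1 := fun k t => (hηchar k).2 t
  set triv : Fin m → Prop := fun k => ∀ γ, η k γ = 1 with htriv
  set B : V := ∑ k ∈ Finset.univ.filter (fun k => triv k), ak k with hB
  -- nontrivial coefficient sums tend to zero
  have hwit : ∀ k, ¬ triv k → ∃ γ0, η k γ0 ≠ 1 := by
    intro k hk'; by_contra hcon; push_neg at hcon; exact hk' hcon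
  have hE2 : Tendsto (fun n => ∑ k ∈ Finset.univ.filter (fun k => ¬ triv k),
      ‖avg (H n) (fun γ => (starRingEnd ℂ) (η k γ))‖ * ‖ak k‖) atTop (nhds 0) := by
    have hterm : ∀ k ∈ Finset.univ.filter (fun k => ¬ triv k),
        Tendsto (fun n => ‖avg (H n) (fun γ => (starRingEnd ℂ) (η k γ))‖ * ‖ak k‖)
          atTop (nhds 0) := by
      intro k hk'
      rw [Finset.mem_filter] at hk'
      obtain ⟨γ0, hγ0⟩ := hwit k hk'.2
      have hγ0' : (starRingEnd ℂ) (η k γ0) ≠ 1 := by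
        intro hcon; apply hγ0
        have := congrArg (starRingEnd ℂ) hcon
        simpa using this
      have h0 := char_avg_tendsto_zero hH ((hηchar k).conj) hγ0'
      have := (h0.norm).mul_const ‖ak k‖
      simpa using this
    have := tendsto_finset_sum _ hterm
    simpa using this
  have hE3 : Tendsto (fun n => ∑ k ∈ Finset.univ.filter (fun k => ¬ triv k),
      ‖avg (H n) (η k)‖ * ‖ak k‖) atTop (nhds 0) := by
    have hterm : ∀ k ∈ Finset.univ.filter (fun k => ¬ triv k),
        Tendsto (fun n => ‖avg (H n) (η k)‖ * ‖ak k‖) atTop (nhds 0) := by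
      intro k hk'
      rw [Finset.mem_filter] at hk'
      obtain ⟨γ0, hγ0⟩ := hwit k hk'.2
      have h0 := char_avg_tendsto_zero hH (hηchar k) hγ0
      have := (h0.norm).mul_const ‖ak k‖
      simpa using this
    have := tendsto_finset_sum _ hterm
    simpa using this
  have hE4 : Tendsto (fun n => ‖avg (H n) (fun γ => (starRingEnd ℂ) (χ γ) • h γ) - b‖)
      atTop (nhds 0) := by
    have := (htend.sub (tendsto_const_nhds (x := b))).norm
    simpa using this
  have hε8 : (0:ℝ) < ε/8 := by positivity
  filter_upwards [eventually_nonempty hH, hE2.eventually_lt_const hε8,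
    hE3.eventually_lt_const hε8, hE4.eventually_lt_const hε8] with n h1 h2 h3 h4
  intro t
  set W := H n with hW
  -- replace h by P in the window average over t - γ
  have hA : ‖avg W (fun γ => (starRingEnd ℂ) (χ (t - γ)) • h (t - γ)) -
      avg W (fun γ => (starRingEnd ℂ) (χ (t - γ)) • P (t - γ))‖ ≤ ε/8 := by
    rw [← avg_sub]
    have e : (fun γ => (starRingEnd ℂ) (χ (t - γ)) • h (t - γ) -
        (starRingEnd ℂ) (χ (t - γ)) • P (t - γ)) =
        fun γ => (starRingEnd ℂ) (χ (t - γ)) • (h (t - γ) - P (t - γ)) := by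
      funext γ; rw [smul_sub]
    rw [e]
    refine norm_avg_le _ _ (le_of_lt hε8) (fun γ _ => ?_)
    rw [norm_smul]
    have : ‖(starRingEnd ℂ) (χ (t - γ))‖ = 1 := by
      rw [RCLike.norm_conj]; exact hχ.2 _
    rw [this, one_mul]
    exact (hhP _).le
  -- same replacement in the plain window average
  have hA' : ‖avg W (fun γ => (starRingEnd ℂ) (χ γ) • h γ) -
      avg W (fun γ => (starRingEnd ℂ) (χ γ) • P γ)‖ ≤ ε/8 := by
    rw [← avg_sub]
    have e : (fun γ => (starRingEnd ℂ) (χ γ) • h γ - (starRingEnd ℂ) (χ γ) • P γ) =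
        fun γ => (starRingEnd ℂ) (χ γ) • (h γ - P γ) := by
      funext γ; rw [smul_sub]
    rw [e]
    refine norm_avg_le _ _ (le_of_lt hε8) (fun γ _ => ?_)
    rw [norm_smul]
    have : ‖(starRingEnd ℂ) (χ γ)‖ = 1 := by
      rw [RCLike.norm_conj]; exact hχ.2 _
    rw [this, one_mul]
    exact (hhP _).le
  -- expand the trig polynomial averages
  have hid1 : avg W (fun γ => (starRingEnd ℂ) (χ (t - γ)) • P (t - γ)) =
      ∑ k, (η k t * avg W (fun γ => (starRingEnd ℂ) (η k γ))) • ak k := by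
    have e : (fun γ => (starRingEnd ℂ) (χ (t - γ)) • P (t - γ)) =
        fun γ => ∑ k, (η k t • ((starRingEnd ℂ) (η k γ) • ak k)) := by
      funext γ
      rw [hPeq (t - γ), Finset.smul_sum]
      refine Finset.sum_congr rfl (fun k _ => ?_)
      rw [smul_smul, smul_smul, ← (hηchar k).map_sub t γ]
    rw [e, avg_sum]
    refine Finset.sum_congr rfl (fun k _ => ?_)
    rw [avg_const_smul, avg_smul_fun, smul_smul]
  have hid2 : avg W (fun γ => (starRingEnd ℂ) (χ γ) • P γ) =
      ∑ k, (avg W (η k)) • ak k := by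
    have e : (fun γ => (starRingEnd ℂ) (χ γ) • P γ) =
        fun γ => ∑ k, (η k γ • ak k) := by
      funext γ
      rw [hPeq γ, Finset.smul_sum]
      refine Finset.sum_congr rfl (fun k _ => ?_)
      rw [smul_smul]
    rw [e, avg_sum]
    refine Finset.sum_congr rfl (fun k _ => ?_)
    rw [avg_smul_fun]
  -- trivial characters give exactly B
  have hconj_one : ∀ k, triv k → (fun γ => (starRingEnd ℂ) (η k γ)) = fun _ => (1:ℂ) := by
    intro k hk'; funext γ; rw [hk' γ]; simp
  have hPB : ‖(∑ k, (η k t * avg W (fun γ => (starRingEnd ℂ) (η k γ))) • ak k) - B‖ ≤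
      ∑ k ∈ Finset.univ.filter (fun k => ¬ triv k),
        ‖avg (H n) (fun γ => (starRingEnd ℂ) (η k γ))‖ * ‖ak k‖ := by
    rw [← Finset.sum_filter_add_sum_filter_not Finset.univ triv]
    have e1 : ∑ k ∈ Finset.univ.filter (fun k => triv k),
        (η k t * avg W (fun γ => (starRingEnd ℂ) (η k γ))) • ak k = B := by
      rw [hB]
      refine Finset.sum_congr rfl (fun k hk' => ?_)
      rw [Finset.mem_filter] at hk'
      rw [hconj_one k hk'.2, avg_one h1, hk'.2 t, one_mul, one_smul]
    rw [e1, add_sub_cancel_left]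
    calc ‖∑ k ∈ Finset.univ.filter (fun k => ¬ triv k),
        (η k t * avg W (fun γ => (starRingEnd ℂ) (η k γ))) • ak k‖
        ≤ ∑ k ∈ Finset.univ.filter (fun k => ¬ triv k),
          ‖(η k t * avg W (fun γ => (starRingEnd ℂ) (η k γ))) • ak k‖ := norm_sum_le _ _
      _ ≤ ∑ k ∈ Finset.univ.filter (fun k => ¬ triv k),
          ‖avg (H n) (fun γ => (starRingEnd ℂ) (η k γ))‖ * ‖ak k‖ := by
          refine Finset.sum_le_sum (fun k _ => ?_)
          rw [norm_smul, norm_mul, hη_norm k t, one_mul]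
  have hηone : ∀ k, triv k → (η k) = fun _ => (1:ℂ) := fun k hk' => funext hk'
  have hPb' : ‖(∑ k, (avg W (η k)) • ak k) - B‖ ≤
      ∑ k ∈ Finset.univ.filter (fun k => ¬ triv k), ‖avg (H n) (η k)‖ * ‖ak k‖ := by
    rw [← Finset.sum_filter_add_sum_filter_not Finset.univ triv]
    have e1 : ∑ k ∈ Finset.univ.filter (fun k => triv k), (avg W (η k)) • ak k = B := by
      rw [hB]
      refine Finset.sum_congr rfl (fun k hk' => ?_)
      rw [Finset.mem_filter] at hk'
      rw [hηone k hk'.2, avg_one h1, one_smul]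
    rw [e1, add_sub_cancel_left]
    calc ‖∑ k ∈ Finset.univ.filter (fun k => ¬ triv k), (avg W (η k)) • ak k‖
        ≤ ∑ k ∈ Finset.univ.filter (fun k => ¬ triv k), ‖(avg W (η k)) • ak k‖ :=
          norm_sum_le _ _
      _ ≤ ∑ k ∈ Finset.univ.filter (fun k => ¬ triv k), ‖avg (H n) (η k)‖ * ‖ak k‖ := by
          refine Finset.sum_le_sum (fun k _ => ?_)
          rw [norm_smul]
  -- assemble
  set A := avg W (fun γ => (starRingEnd ℂ) (χ (t - γ)) • h (t - γ)) with hAdef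
  set AP := avg W (fun γ => (starRingEnd ℂ) (χ (t - γ)) • P (t - γ)) with hAPdef
  set A' := avg W (fun γ => (starRingEnd ℂ) (χ γ) • h γ) with hA'def
  set AP' := avg W (fun γ => (starRingEnd ℂ) (χ γ) • P γ) with hAP'def
  have d1 : ‖A - AP‖ ≤ ε/8 := hA
  have d2 : ‖AP - B‖ < ε/8 := by rw [hid1]; exact lt_of_le_of_lt hPB h2
  have d3 : ‖AP' - B‖ < ε/8 := by rw [hid2]; exact lt_of_le_of_lt hPb' h3
  have d4 : ‖A' - AP'‖ ≤ ε/8 := hA'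
  have d5 : ‖A' - b‖ < ε/8 := h4
  have : A - b = (A - AP) + (AP - B) + (B - AP') + (AP' - A') + (A' - b) := by abel
  rw [this]
  have hn3 : ‖B - AP'‖ < ε/8 := by rw [norm_sub_rev]; exact d3
  have hn4 : ‖AP' - A'‖ ≤ ε/8 := by rw [norm_sub_rev]; exact d4
  calc ‖A - AP + (AP - B) + (B - AP') + (AP' - A') + (A' - b)‖
      ≤ ‖A - AP + (AP - B) + (B - AP') + (AP' - A')‖ + ‖A' - b‖ := norm_add_le _ _
    _ ≤ ‖A - AP + (AP - B) + (B - AP')‖ + ‖AP' - A'‖ + ‖A' - b‖ := by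
        gcongr; exact norm_add_le _ _
    _ ≤ ‖A - AP + (AP - B)‖ + ‖B - AP'‖ + ‖AP' - A'‖ + ‖A' - b‖ := by
        gcongr; exact norm_add_le _ _
    _ ≤ ‖A - AP‖ + ‖AP - B‖ + ‖B - AP'‖ + ‖AP' - A'‖ + ‖A' - b‖ := by
        gcongr; exact norm_add_le _ _
    _ ≤ ε := by linarith

-- existence of the Fourier coefficient
open scoped Classical in
lemma fourier_coeff_exists [CompleteSpace V] (hH : IsBohrBochner H) {χ : Γ → ℂ}
    (hχ : IsChar χ) {h : Γ → V} (hAP : IsAP h) :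
    ∃ b : V, Tendsto (fun n => avg (H n) (fun γ => (starRingEnd ℂ) (χ γ) • h γ))
      atTop (nhds b) := by
  apply cauchySeq_tendsto_of_complete
  rw [Metric.cauchySeq_iff]
  intro ε hε
  obtain ⟨P, ⟨m, χk, ak, hk, hPeq⟩, hhP⟩ := hAP (ε/8) (by positivity)
  set η : Fin m → Γ → ℂ := fun k s => (starRingEnd ℂ) (χ s) * χk k s with hη
  have hηchar : ∀ k, IsChar (η k) := fun k => (hχ.conj).mul (hk k)
  -- trig-poly averages converge
  have hconv : Tendsto (fun n => ∑ k, (avg (H n) (η k)) • ak k) atTop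
      (nhds (∑ k, (if ∀ γ, η k γ = 1 then (1:ℂ) else 0) • ak k)) := by
    refine tendsto_finset_sum _ (fun k _ => ?_)
    exact (char_avg_tendsto hH (hηchar k)).smul_const (ak k)
  have hcauchy := hconv.cauchySeq
  rw [Metric.cauchySeq_iff] at hcauchy
  obtain ⟨N, hN⟩ := hcauchy (ε/2) (by positivity)
  refine ⟨N, fun p hp q hq => ?_⟩
  have hclose : ∀ r : ℕ, ‖avg (H r) (fun γ => (starRingEnd ℂ) (χ γ) • h γ) -
      ∑ k, (avg (H r) (η k)) • ak k‖ ≤ ε/8 := by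
    intro r
    have hid2 : avg (H r) (fun γ => (starRingEnd ℂ) (χ γ) • P γ) =
        ∑ k, (avg (H r) (η k)) • ak k := by
      have e : (fun γ => (starRingEnd ℂ) (χ γ) • P γ) = fun γ => ∑ k, (η k γ • ak k) := by
        funext γ
        rw [hPeq γ, Finset.smul_sum]
        refine Finset.sum_congr rfl (fun k _ => ?_)
        rw [smul_smul]
      rw [e, avg_sum]
      refine Finset.sum_congr rfl (fun k _ => ?_)
      rw [avg_smul_fun]
    rw [← hid2, ← avg_sub]
    have e : (fun γ => (starRingEnd ℂ) (χ γ) • h γ - (starRingEnd ℂ) (χ γ) • P γ) =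
        fun γ => (starRingEnd ℂ) (χ γ) • (h γ - P γ) := by
      funext γ; rw [smul_sub]
    rw [e]
    refine norm_avg_le _ _ (by positivity) (fun γ _ => ?_)
    rw [norm_smul]
    have : ‖(starRingEnd ℂ) (χ γ)‖ = 1 := by rw [RCLike.norm_conj]; exact hχ.2 _
    rw [this, one_mul]
    exact (hhP _).le
  have hd := hN p hp q hq
  rw [dist_eq_norm] at hd ⊢
  have e : avg (H p) (fun γ => (starRingEnd ℂ) (χ γ) • h γ) -
      avg (H q) (fun γ => (starRingEnd ℂ) (χ γ) • h γ) =
      (avg (H p) (fun γ => (starRingEnd ℂ) (χ γ) • h γ) - ∑ k, (avg (H p) (η k)) • ak k)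
      + ((∑ k, (avg (H p) (η k)) • ak k) - ∑ k, (avg (H q) (η k)) • ak k)
      + ((∑ k, (avg (H q) (η k)) • ak k) -
          avg (H q) (fun γ => (starRingEnd ℂ) (χ γ) • h γ)) := by abel
  rw [e]
  have h3 : ‖(∑ k, (avg (H q) (η k)) • ak k) -
      avg (H q) (fun γ => (starRingEnd ℂ) (χ γ) • h γ)‖ ≤ ε/8 := by
    rw [norm_sub_rev]; exact hclose q
  calc _ ≤ ‖(avg (H p) (fun γ => (starRingEnd ℂ) (χ γ) • h γ) -
        ∑ k, (avg (H p) (η k)) • ak k)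
      + ((∑ k, (avg (H p) (η k)) • ak k) - ∑ k, (avg (H q) (η k)) • ak k)‖
      + ‖(∑ k, (avg (H q) (η k)) • ak k) -
          avg (H q) (fun γ => (starRingEnd ℂ) (χ γ) • h γ)‖ := norm_add_le _ _
    _ ≤ ‖avg (H p) (fun γ => (starRingEnd ℂ) (χ γ) • h γ) -
        ∑ k, (avg (H p) (η k)) • ak k‖
      + ‖(∑ k, (avg (H p) (η k)) • ak k) - ∑ k, (avg (H q) (η k)) • ak k‖
      + ‖(∑ k, (avg (H q) (η k)) • ak k) -
          avg (H q) (fun γ => (starRingEnd ℂ) (χ γ) • h γ)‖ := by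
        gcongr; exact norm_add_le _ _
    _ < ε := by
        have := hclose p
        linarith
  done

end Core

end APProof

namespace APProof

open Finset Filter BoundedContinuousFunction

section Main

variable {Γ : Type*} [AddCommGroup Γ] [DecidableEq Γ]
    [TopologicalSpace Γ] [DiscreteTopology Γ]
    {X : Type*} [NormedAddCommGroup X] [InnerProductSpace ℂ X]
    {Y : Type*} [NormedAddCommGroup Y] [InnerProductSpace ℂ Y]
    {H : ℕ → Finset Γ}
    {ρ : Γ → (X ≃ₗᵢ[ℂ] X)}
    {C : (Γ →ᵇ X) →L[ℂ] (Γ →ᵇ Y)}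
    {h : Γ → X} {fh : Γ →ᵇ X}

lemma bcf_avg_apply (W : Finset Γ) (F : Γ → (Γ →ᵇ X)) (t : Γ) :
    avg W F t = ((W.card : ℂ))⁻¹ • ∑ γ ∈ W, F γ t := by
  unfold avg
  rw [BoundedContinuousFunction.coe_smul]
  simp

lemma char_shift {χ : Γ → ℂ} (hχ : IsChar χ) (t γ : Γ) :
    χ t * (starRingEnd ℂ) (χ (t - γ)) = χ γ := by
  rw [hχ.map_sub, map_mul, Complex.conj_conj]
  calc χ t * ((starRingEnd ℂ) (χ t) * χ γ) = (χ t * (starRingEnd ℂ) (χ t)) * χ γ := by ring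
  _ = χ γ := by rw [hχ.mul_conj, one_mul]

lemma mode_approx (hH : IsBohrBochner H)
    (hC : ∀ (γ : Γ) (f g : Γ →ᵇ X),
      (∀ γ' : Γ, g γ' = ρ γ' ((ρ (γ' - γ)).symm (f (γ' - γ)))) →
      ∀ γ'' : Γ, C g γ'' = C f (γ'' - γ))
    (hAP : IsAP h) (hfh : ∀ γ : Γ, fh γ = ρ γ (h γ))
    {χ : Γ → ℂ} (hχ : IsChar χ) {b : X}
    (htend : Tendsto (fun n => avg (H n) (fun γ => (starRingEnd ℂ) (χ γ) • h γ))
      atTop (nhds b))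
    {g : Γ →ᵇ X} (hg : ∀ γ : Γ, g γ = ρ γ (χ γ • b))
    {ε : ℝ} (hε : 0 < ε) :
    ∀ᶠ n in atTop, ∃ gn : Γ →ᵇ X, ‖gn - g‖ ≤ ε ∧
      ∀ t : Γ, C gn t = ((H n).card : ℂ)⁻¹ • ∑ γ ∈ H n, χ γ • ((C fh) (t - γ)) := by
  have hbd : ∀ s : Γ, ‖h s‖ ≤ ‖fh‖ := by
    intro s
    have : ‖fh s‖ = ‖h s‖ := by rw [hfh s]; exact (ρ s).norm_map _
    rw [← this]
    exact BoundedContinuousFunction.norm_coe_le_norm fh s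
  set u : Γ → (Γ →ᵇ X) := fun γ => BoundedContinuousFunction.ofNormedAddCommGroup
    (fun t => ρ t (h (t - γ))) (continuous_of_discreteTopology) ‖fh‖
    (fun t => by rw [(ρ t).norm_map]; exact hbd _) with hu
  have hu_apply : ∀ γ t, u γ t = ρ t (h (t - γ)) := fun γ t => rfl
  have hCu : ∀ γ t, C (u γ) t = C fh (t - γ) := by
    intro γ t
    refine hC γ fh (u γ) (fun γ' => ?_) t
    rw [hu_apply, hfh (γ' - γ), (ρ (γ' - γ)).symm_apply_apply]
  filter_upwards [core_uniform hH hχ hAP htend hε] with n hn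
  refine ⟨avg (H n) (fun γ => χ γ • u γ), ?_, ?_⟩
  · rw [BoundedContinuousFunction.norm_le hε.le]
    intro t
    have lhs1 : avg (H n) (fun γ => χ γ • u γ) t =
        ((H n).card : ℂ)⁻¹ • ∑ γ ∈ H n, χ γ • ρ t (h (t - γ)) := by
      rw [bcf_avg_apply]
      refine congrArg (fun z => ((H n).card : ℂ)⁻¹ • z) ?_
      refine Finset.sum_congr rfl (fun γ _ => ?_)
      show χ γ • (u γ) t = χ γ • ρ t (h (t - γ))
      rw [hu_apply]
    have rhs1 : ρ t (χ t • avg (H n) (fun γ => (starRingEnd ℂ) (χ (t - γ)) • h (t - γ))) =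
        ((H n).card : ℂ)⁻¹ • ∑ γ ∈ H n, χ γ • ρ t (h (t - γ)) := by
      unfold avg
      rw [map_smul, map_smul, map_sum, smul_comm (χ t)]
      refine congrArg (fun z => ((H n).card : ℂ)⁻¹ • z) ?_
      rw [Finset.smul_sum]
      refine Finset.sum_congr rfl (fun γ _ => ?_)
      rw [map_smul, smul_smul, char_shift hχ t γ]
    have e1 : avg (H n) (fun γ => χ γ • u γ) t =
        ρ t (χ t • avg (H n) (fun γ => (starRingEnd ℂ) (χ (t - γ)) • h (t - γ))) :=
      lhs1.trans rhs1.symm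
    rw [BoundedContinuousFunction.coe_sub, Pi.sub_apply, e1, hg t]
    rw [← map_sub, (ρ t).norm_map, ← smul_sub, norm_smul, hχ.2, one_mul]
    exact hn t
  · intro t
    have e2 : C (avg (H n) (fun γ => χ γ • u γ)) =
        ((H n).card : ℂ)⁻¹ • ∑ γ ∈ H n, χ γ • C (u γ) := by
      unfold avg
      rw [map_smul, map_sum]
      refine congrArg _ (Finset.sum_congr rfl (fun γ _ => ?_))
      rw [map_smul]
    rw [e2]
    show ((H n).card : ℂ)⁻¹ • ((∑ γ ∈ H n, χ γ • C (u γ)) t) = _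
    refine congrArg (fun z => ((H n).card : ℂ)⁻¹ • z) ?_
    have : (∑ γ ∈ H n, χ γ • C (u γ)) t = ∑ γ ∈ H n, (χ γ • C (u γ)) t := by
      simp
    rw [this]
    refine Finset.sum_congr rfl (fun γ _ => ?_)
    show χ γ • (C (u γ)) t = χ γ • (C fh) (t - γ)
    rw [hCu γ t]

end Main

end APProof

namespace APProof

open Finset Filter BoundedContinuousFunction

section Main2

variable {Γ : Type*} [AddCommGroup Γ] [DecidableEq Γ]
    [TopologicalSpace Γ] [DiscreteTopology Γ]
    {X : Type*} [NormedAddCommGroup X] [InnerProductSpace ℂ X]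
    {Y : Type*} [NormedAddCommGroup Y] [InnerProductSpace ℂ Y]
    {H : ℕ → Finset Γ}
    {ρ : Γ → (X ≃ₗᵢ[ℂ] X)}
    {C : (Γ →ᵇ X) →L[ℂ] (Γ →ᵇ Y)}
    {h : Γ → X} {fh : Γ →ᵇ X}

lemma Kpsi [CompleteSpace X] (hH : IsBohrBochner H)
    (hC : ∀ (γ : Γ) (f g : Γ →ᵇ X),
      (∀ γ' : Γ, g γ' = ρ γ' ((ρ (γ' - γ)).symm (f (γ' - γ)))) →
      ∀ γ'' : Γ, C g γ'' = C f (γ'' - γ))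
    (hAP : IsAP h) (hfh : ∀ γ : Γ, fh γ = ρ γ (h γ))
    (hmodes : ∀ (χ : Γ → ℂ) (b : X) (g : Γ →ᵇ X), IsChar χ →
      Tendsto (fun n => (((H n).card : ℂ))⁻¹ • ∑ γ ∈ H n, (starRingEnd ℂ) (χ γ) • h γ)
        atTop (nhds b) →
      (∀ γ : Γ, g γ = ρ γ (χ γ • b)) → C g = 0)
    {χ : Γ → ℂ} (hχ : IsChar χ) {ε : ℝ} (hε : 0 < ε) :
    ∀ᶠ n in atTop, ∀ t : Γ,
      ‖((H n).card : ℂ)⁻¹ • ∑ γ ∈ H n, χ γ • ((C fh) (t - γ))‖ ≤ ε := by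
  obtain ⟨b, htend⟩ := fourier_coeff_exists hH hχ hAP
  set g : Γ →ᵇ X := BoundedContinuousFunction.ofNormedAddCommGroup
    (fun t => ρ t (χ t • b)) continuous_of_discreteTopology ‖b‖
    (fun t => by rw [(ρ t).norm_map, norm_smul, hχ.2, one_mul]) with hgdef
  have hg : ∀ t, g t = ρ t (χ t • b) := fun t => rfl
  have hCg : C g = 0 := hmodes χ b g hχ htend hg
  have hε' : 0 < ε / (‖C‖ + 1) := by positivity
  filter_upwards [mode_approx hH hC hAP hfh hχ htend hg hε'] with n hn
  obtain ⟨gn, hgn, hCgn⟩ := hn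
  intro t
  rw [← hCgn t]
  calc ‖C gn t‖ ≤ ‖C gn‖ := norm_coe_le_norm _ _
    _ = ‖C (gn - g)‖ := by rw [map_sub, hCg, sub_zero]
    _ ≤ ‖C‖ * ‖gn - g‖ := C.le_opNorm _
    _ ≤ ‖C‖ * (ε / (‖C‖ + 1)) := mul_le_mul_of_nonneg_left hgn (norm_nonneg C)
    _ ≤ (‖C‖ + 1) * (ε / (‖C‖ + 1)) := by
        refine mul_le_mul_of_nonneg_right (by linarith) hε'.le
    _ = ε := by field_simp

lemma psi_trig_approx
    (hC : ∀ (γ : Γ) (f g : Γ →ᵇ X),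
      (∀ γ' : Γ, g γ' = ρ γ' ((ρ (γ' - γ)).symm (f (γ' - γ)))) →
      ∀ γ'' : Γ, C g γ'' = C f (γ'' - γ))
    (hAP : IsAP h) (hfh : ∀ γ : Γ, fh γ = ρ γ (h γ))
    {ε : ℝ} (hε : 0 < ε) :
    ∃ (m : ℕ) (χk : Fin m → Γ → ℂ) (wk : Fin m → Y),
      (∀ k, IsChar (χk k)) ∧ ∀ t : Γ, ‖(C fh) t - ∑ k, χk k t • wk k‖ ≤ ε := by
  have hε' : 0 < ε / (‖C‖ + 1) := by positivity
  obtain ⟨P, ⟨m, χk, ak, hk, hPeq⟩, hhP⟩ := hAP _ hε'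
  set v : Fin m → (Γ →ᵇ X) := fun k => BoundedContinuousFunction.ofNormedAddCommGroup
    (fun t => ρ t (χk k t • ak k)) continuous_of_discreteTopology ‖ak k‖
    (fun t => by rw [(ρ t).norm_map, norm_smul, (hk k).2, one_mul]) with hv
  have hv_apply : ∀ k t, v k t = ρ t (χk k t • ak k) := fun k t => rfl
  have hmode : ∀ k (γ : Γ), C (v k) γ = χk k γ • (C (v k)) 0 := by
    intro k γ
    have hgprop : ∀ γ' : Γ, ((starRingEnd ℂ) (χk k γ) • v k) γ' =
        ρ γ' ((ρ (γ' - γ)).symm (v k (γ' - γ))) := by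
      intro γ'
      show (starRingEnd ℂ) (χk k γ) • (v k γ') = _
      rw [hv_apply, hv_apply, (ρ (γ' - γ)).symm_apply_apply, (hk k).map_sub γ' γ,
        map_smul, map_smul, smul_smul, mul_comm]
    have h2 := hC γ (v k) ((starRingEnd ℂ) (χk k γ) • v k) hgprop γ
    rw [map_smul] at h2
    have h3 : (((starRingEnd ℂ) (χk k γ)) • C (v k)) γ =
        (starRingEnd ℂ) (χk k γ) • (C (v k) γ) := rfl
    rw [h3, sub_self] at h2
    calc C (v k) γ = (χk k γ * (starRingEnd ℂ) (χk k γ)) • C (v k) γ := by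
          rw [(hk k).mul_conj, one_smul]
      _ = χk k γ • ((starRingEnd ℂ) (χk k γ) • C (v k) γ) := by rw [smul_smul]
      _ = χk k γ • C (v k) 0 := by rw [h2]
  refine ⟨m, χk, fun k => C (v k) 0, hk, fun t => ?_⟩
  have hsub : ∀ s : Γ, fh s - (∑ k, v k) s = ρ s (h s - P s) := by
    intro s
    rw [hfh s, map_sub]
    refine congrArg _ ?_
    have e1 : (∑ k, v k) s = ∑ k, v k s := by simp
    rw [e1, hPeq s, map_sum]
    exact Finset.sum_congr rfl (fun k _ => (hv_apply k s).symm)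
  have hnorm : ‖fh - ∑ k, v k‖ ≤ ε / (‖C‖ + 1) := by
    rw [BoundedContinuousFunction.norm_le hε'.le]
    intro s
    rw [BoundedContinuousFunction.coe_sub, Pi.sub_apply, hsub s, (ρ s).norm_map]
    exact (hhP s).le
  have e2 : ∑ k, χk k t • (C (v k)) 0 = (C (∑ k, v k)) t := by
    rw [map_sum]
    have : (∑ k, C (v k)) t = ∑ k, (C (v k)) t := by simp
    rw [this]
    exact Finset.sum_congr rfl (fun k _ => (hmode k t).symm)
  rw [e2]
  have e3 : (C fh) t - (C (∑ k, v k)) t = (C (fh - ∑ k, v k)) t := by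
    rw [map_sub]; rfl
  rw [e3]
  calc ‖(C (fh - ∑ k, v k)) t‖ ≤ ‖C (fh - ∑ k, v k)‖ := norm_coe_le_norm _ _
    _ ≤ ‖C‖ * ‖fh - ∑ k, v k‖ := C.le_opNorm _
    _ ≤ ‖C‖ * (ε / (‖C‖ + 1)) := mul_le_mul_of_nonneg_left hnorm (norm_nonneg C)
    _ ≤ (‖C‖ + 1) * (ε / (‖C‖ + 1)) := by
        refine mul_le_mul_of_nonneg_right (by linarith) hε'.le
    _ = ε := by field_simp

end Main2

end APProof

namespace APProof

open Finset Filter BoundedContinuousFunction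

section Main3

open scoped InnerProductSpace

variable {Γ : Type*} [AddCommGroup Γ] [DecidableEq Γ]
    [TopologicalSpace Γ] [DiscreteTopology Γ]
    {Y : Type*} [NormedAddCommGroup Y] [InnerProductSpace ℂ Y]
    {H : ℕ → Finset Γ}

lemma star_step {ψ : Γ →ᵇ Y}
    (happrox : ∀ ε : ℝ, 0 < ε → ∃ (m : ℕ) (χk : Fin m → Γ → ℂ) (wk : Fin m → Y),
      (∀ k, IsChar (χk k)) ∧ ∀ t : Γ, ‖ψ t - ∑ k, χk k t • wk k‖ ≤ ε)
    (hK : ∀ (χ : Γ → ℂ), IsChar χ → ∀ ε : ℝ, 0 < ε → ∀ᶠ n in atTop, ∀ t : Γ,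
      ‖((H n).card : ℂ)⁻¹ • ∑ γ ∈ H n, χ γ • (ψ (t - γ))‖ ≤ ε)
    {ε : ℝ} (hε : 0 < ε) :
    ∀ᶠ n in atTop, ∀ t : Γ,
      ∑ γ ∈ H n, ‖ψ (t - γ)‖^2 ≤ ((H n).card : ℝ) * ε := by
  set M : ℝ := ‖ψ‖ + 1 with hM
  have hMpos : 0 < M := by positivity
  have hε₁ : 0 < ε / (2 * M) := by positivity
  obtain ⟨m, χk, wk, hk, hQ⟩ := happrox _ hε₁
  set Q : Γ → Y := fun s => ∑ k, χk k s • wk k with hQdef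
  set SW : ℝ := (∑ k, ‖wk k‖) + 1 with hSW
  have hSWpos : 0 < SW := by positivity
  have hδ : 0 < ε / (2 * SW) := by positivity
  have hev : ∀ᶠ n in atTop, ∀ k : Fin m, ∀ t : Γ,
      ‖((H n).card : ℂ)⁻¹ • ∑ γ ∈ H n, χk k γ • (ψ (t - γ))‖ ≤ ε / (2 * SW) :=
    eventually_all.2 (fun k => hK (χk k) (hk k) _ hδ)
  filter_upwards [hev] with n hn t
  set W := H n with hW
  have hpt : ∀ s : Γ, ‖ψ s‖^2 ≤ ε / (2 * M) * M + RCLike.re (⟪Q s, ψ s⟫_ℂ) := by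
    intro s
    have e1 : (⟪ψ s, ψ s⟫_ℂ) = ⟪ψ s - Q s, ψ s⟫_ℂ + ⟪Q s, ψ s⟫_ℂ := by
      rw [← inner_add_left]
      congr 1
      abel
    have e2 : ‖ψ s‖^2 = RCLike.re (⟪ψ s, ψ s⟫_ℂ) := (inner_self_eq_norm_sq _).symm
    rw [e2, e1, map_add]
    have e3 : RCLike.re (⟪ψ s - Q s, ψ s⟫_ℂ) ≤ ε / (2 * M) * M := by
      calc RCLike.re (⟪ψ s - Q s, ψ s⟫_ℂ) ≤ ‖(⟪ψ s - Q s, ψ s⟫_ℂ)‖ := RCLike.re_le_norm _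
        _ ≤ ‖ψ s - Q s‖ * ‖ψ s‖ := norm_inner_le_norm _ _
        _ ≤ (ε / (2 * M)) * M := by
            refine mul_le_mul (hQ s) ?_ (norm_nonneg _) hε₁.le
            calc ‖ψ s‖ ≤ ‖ψ‖ := norm_coe_le_norm _ _
              _ ≤ M := by rw [hM]; linarith
    linarith
  have e4 : ∑ γ ∈ W, (⟪Q (t - γ), ψ (t - γ)⟫_ℂ) =
      ∑ k, (⟪wk k, (starRingEnd ℂ) (χk k t) • ∑ γ ∈ W, χk k γ • ψ (t - γ)⟫_ℂ) := by
    have e5 : ∀ γ, (⟪Q (t - γ), ψ (t - γ)⟫_ℂ) =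
        ∑ k, ((starRingEnd ℂ) (χk k t) * χk k γ) * (⟪wk k, ψ (t - γ)⟫_ℂ) := by
      intro γ
      rw [hQdef, sum_inner]
      refine Finset.sum_congr rfl (fun k _ => ?_)
      rw [inner_smul_left, (hk k).map_sub t γ, map_mul, Complex.conj_conj]
    calc ∑ γ ∈ W, (⟪Q (t - γ), ψ (t - γ)⟫_ℂ)
        = ∑ γ ∈ W, ∑ k, ((starRingEnd ℂ) (χk k t) * χk k γ) * (⟪wk k, ψ (t - γ)⟫_ℂ) :=
          Finset.sum_congr rfl (fun γ _ => e5 γ)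
      _ = ∑ k, ∑ γ ∈ W, ((starRingEnd ℂ) (χk k t) * χk k γ) * (⟪wk k, ψ (t - γ)⟫_ℂ) :=
          Finset.sum_comm
      _ = ∑ k, (⟪wk k, (starRingEnd ℂ) (χk k t) • ∑ γ ∈ W, χk k γ • ψ (t - γ)⟫_ℂ) := by
          refine Finset.sum_congr rfl (fun k _ => ?_)
          rw [inner_smul_right, inner_sum, Finset.mul_sum]
          refine Finset.sum_congr rfl (fun γ _ => ?_)
          rw [inner_smul_right]
          ring
  have hbk : ∀ k : Fin m,
      ‖(⟪wk k, (starRingEnd ℂ) (χk k t) • ∑ γ ∈ W, χk k γ • ψ (t - γ)⟫_ℂ)‖ ≤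
      ‖wk k‖ * ((W.card : ℝ) * (ε / (2 * SW))) := by
    intro k
    have hS : ‖∑ γ ∈ W, χk k γ • ψ (t - γ)‖ ≤ (W.card : ℝ) * (ε / (2 * SW)) :=
      norm_sum_le_of_avg hδ.le (hn k t)
    calc ‖(⟪wk k, (starRingEnd ℂ) (χk k t) • ∑ γ ∈ W, χk k γ • ψ (t - γ)⟫_ℂ)‖
        ≤ ‖wk k‖ * ‖(starRingEnd ℂ) (χk k t) • ∑ γ ∈ W, χk k γ • ψ (t - γ)‖ :=
          norm_inner_le_norm _ _
      _ = ‖wk k‖ * ‖∑ γ ∈ W, χk k γ • ψ (t - γ)‖ := by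
          rw [norm_smul, RCLike.norm_conj, (hk k).2, one_mul]
      _ ≤ ‖wk k‖ * ((W.card : ℝ) * (ε / (2 * SW))) :=
          mul_le_mul_of_nonneg_left hS (norm_nonneg _)
  have hsum : RCLike.re (∑ γ ∈ W, (⟪Q (t - γ), ψ (t - γ)⟫_ℂ)) ≤ (W.card : ℝ) * (ε / 2) := by
    rw [e4, map_sum]
    calc ∑ k, RCLike.re (⟪wk k, (starRingEnd ℂ) (χk k t) • ∑ γ ∈ W, χk k γ • ψ (t - γ)⟫_ℂ)
        ≤ ∑ k, ‖(⟪wk k, (starRingEnd ℂ) (χk k t) • ∑ γ ∈ W, χk k γ • ψ (t - γ)⟫_ℂ)‖ :=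
          Finset.sum_le_sum (fun k _ => RCLike.re_le_norm _)
      _ ≤ ∑ k, ‖wk k‖ * ((W.card : ℝ) * (ε / (2 * SW))) :=
          Finset.sum_le_sum (fun k _ => hbk k)
      _ = (∑ k, ‖wk k‖) * ((W.card : ℝ) * (ε / (2 * SW))) := by rw [← Finset.sum_mul]
      _ ≤ SW * ((W.card : ℝ) * (ε / (2 * SW))) := by
          refine mul_le_mul_of_nonneg_right ?_ (by positivity)
          rw [hSW]; linarith
      _ = (W.card : ℝ) * (ε / 2) := by field_simp
  calc ∑ γ ∈ W, ‖ψ (t - γ)‖^2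
      ≤ ∑ γ ∈ W, (ε / (2 * M) * M + RCLike.re (⟪Q (t - γ), ψ (t - γ)⟫_ℂ)) :=
        Finset.sum_le_sum (fun γ _ => hpt _)
    _ = (W.card : ℝ) * (ε / (2 * M) * M) +
        RCLike.re (∑ γ ∈ W, (⟪Q (t - γ), ψ (t - γ)⟫_ℂ)) := by
        rw [Finset.sum_add_distrib, Finset.sum_const, nsmul_eq_mul, map_sum]
    _ ≤ (W.card : ℝ) * (ε / (2 * M) * M) + (W.card : ℝ) * (ε / 2) := by linarith [hsum]
    _ = (W.card : ℝ) * ε := by field_simp; ring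

set_option maxHeartbeats 1000000 in
lemma final_zero (hH : IsBohrBochner H) {ψ : Γ →ᵇ Y}
    (happrox : ∀ ε : ℝ, 0 < ε → ∃ (m : ℕ) (χk : Fin m → Γ → ℂ) (wk : Fin m → Y),
      (∀ k, IsChar (χk k)) ∧ ∀ t : Γ, ‖ψ t - ∑ k, χk k t • wk k‖ ≤ ε)
    (hstar : ∀ ε : ℝ, 0 < ε → ∀ᶠ n in atTop, ∀ t : Γ,
      ∑ γ ∈ H n, ‖ψ (t - γ)‖^2 ≤ ((H n).card : ℝ) * ε) :
    ψ = 0 := by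
  by_contra hne
  have hex : ∃ t0, ψ t0 ≠ 0 := by
    by_contra hall
    push_neg at hall
    refine hne (BoundedContinuousFunction.ext fun t => ?_)
    rw [hall t]
    rfl
  obtain ⟨t0, ht0⟩ := hex
  set c := ‖ψ t0‖ with hc
  have hcpos : 0 < c := norm_pos_iff.2 ht0
  obtain ⟨m, χk, wk, hk, hQ⟩ := happrox (c/8) (by positivity)
  set Q : Γ → Y := fun s => ∑ k, χk k s • wk k with hQdef
  set SW : ℝ := (∑ k, ‖wk k‖) + 1 with hSW
  have hSWpos : 0 < SW := by positivity
  set r : ℝ := (c/8) / SW with hr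
  have hrpos : 0 < r := by positivity
  set coef : Γ → (Fin m → ℂ) := fun τ k => (starRingEnd ℂ) (χk k τ) with hcoef
  have hball : Set.range coef ⊆ Metric.closedBall (0 : Fin m → ℂ) 1 := by
    rintro x ⟨τ, rfl⟩
    rw [Metric.mem_closedBall, dist_zero_right]
    refine (pi_norm_le_iff_of_nonneg zero_le_one).2 (fun k => ?_)
    show ‖(starRingEnd ℂ) (χk k τ)‖ ≤ 1
    rw [RCLike.norm_conj, (hk k).2]
  have htb : TotallyBounded (Set.range coef) :=
    TotallyBounded.subset hball (isCompact_closedBall _ _).totallyBounded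
  obtain ⟨T, hTsub, hTfin, hTcover⟩ :=
    (totallyBounded_iff_subset.1 htb) _ (Metric.dist_mem_uniformity hrpos)
  classical
  set σ : (Fin m → ℂ) → Γ := fun y => if hy : ∃ τ, coef τ = y then hy.choose else 0 with hσ
  have hσ_spec : ∀ y ∈ T, coef (σ y) = y := by
    intro y hy
    obtain ⟨τ, hτ⟩ := hTsub hy
    have hyex : ∃ τ, coef τ = y := ⟨τ, hτ⟩
    rw [hσ]
    simp only [dif_pos hyex]
    exact hyex.choose_spec
  set Tf := hTfin.toFinset with hTf
  have hnet : ∀ τ : Γ, ∃ y ∈ Tf, ∀ t : Γ, ‖ψ (t - τ) - ψ (t - σ y)‖ ≤ c/2 := by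
    intro τ
    have hmem : coef τ ∈ ⋃ y ∈ T, {x | (x, y) ∈ {p : (Fin m → ℂ) × (Fin m → ℂ) | dist p.1 p.2 < r}} :=
      hTcover (Set.mem_range_self τ)
    rw [Set.mem_iUnion₂] at hmem
    obtain ⟨y, hyT, hdist⟩ := hmem
    refine ⟨y, hTfin.mem_toFinset.2 hyT, fun t => ?_⟩
    have hdist' : dist (coef τ) y < r := hdist
    have hdk : ∀ k, ‖coef τ k - y k‖ < r := by
      intro k
      have h1 := dist_le_pi_dist (coef τ) y k
      rw [← dist_eq_norm]
      exact lt_of_le_of_lt h1 hdist'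
    have hQd : ‖Q (t - τ) - Q (t - σ y)‖ ≤ c/8 := by
      have hyk : ∀ k, (starRingEnd ℂ) (χk k (σ y)) = y k := by
        intro k
        exact congrFun (hσ_spec y hyT) k
      have e : Q (t - τ) - Q (t - σ y) = ∑ k, (χk k t * (coef τ k - y k)) • wk k := by
        rw [hQdef, ← Finset.sum_sub_distrib]
        refine Finset.sum_congr rfl (fun k _ => ?_)
        rw [← sub_smul]
        congr 1
        rw [(hk k).map_sub t τ, (hk k).map_sub t (σ y), hyk k, hcoef]
        ring
      rw [e]
      calc ‖∑ k, (χk k t * (coef τ k - y k)) • wk k‖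
          ≤ ∑ k, ‖(χk k t * (coef τ k - y k)) • wk k‖ := norm_sum_le _ _
        _ = ∑ k, ‖coef τ k - y k‖ * ‖wk k‖ := by
            refine Finset.sum_congr rfl (fun k _ => ?_)
            rw [norm_smul, norm_mul, (hk k).2, one_mul]
        _ ≤ ∑ k, r * ‖wk k‖ :=
            Finset.sum_le_sum (fun k _ =>
              mul_le_mul_of_nonneg_right (hdk k).le (norm_nonneg _))
        _ = r * ∑ k, ‖wk k‖ := by rw [Finset.mul_sum]
        _ ≤ r * SW := by
            refine mul_le_mul_of_nonneg_left ?_ hrpos.le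
            rw [hSW]; linarith
        _ = c/8 := by rw [hr]; field_simp
    have e6 : ψ (t - τ) - ψ (t - σ y) =
        (ψ (t - τ) - Q (t - τ)) + (Q (t - τ) - Q (t - σ y)) + (Q (t - σ y) - ψ (t - σ y)) := by
      abel
    rw [e6]
    have b3 : ‖Q (t - σ y) - ψ (t - σ y)‖ ≤ c/8 := by
      rw [norm_sub_rev]; exact hQ _
    calc ‖(ψ (t - τ) - Q (t - τ)) + (Q (t - τ) - Q (t - σ y)) + (Q (t - σ y) - ψ (t - σ y))‖
        ≤ ‖(ψ (t - τ) - Q (t - τ)) + (Q (t - τ) - Q (t - σ y))‖ +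
          ‖Q (t - σ y) - ψ (t - σ y)‖ := norm_add_le _ _
      _ ≤ ‖ψ (t - τ) - Q (t - τ)‖ + ‖Q (t - τ) - Q (t - σ y)‖ +
          ‖Q (t - σ y) - ψ (t - σ y)‖ := by gcongr; exact norm_add_le _ _
      _ ≤ c/8 + c/8 + c/8 := by
          refine add_le_add (add_le_add (hQ _) hQd) b3
      _ ≤ c/2 := by linarith
  have hbig : ∀ γ : Γ, ∃ y ∈ Tf, c/2 ≤ ‖ψ ((t0 + t0 - σ y) - γ)‖ := by
    intro γ
    obtain ⟨y, hy, hprop⟩ := hnet (t0 - γ)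
    refine ⟨y, hy, ?_⟩
    have h1 := hprop (t0 + t0 - γ)
    have e1 : t0 + t0 - γ - (t0 - γ) = t0 := by abel
    have e2 : t0 + t0 - γ - σ y = (t0 + t0 - σ y) - γ := by abel
    rw [e1, e2] at h1
    have h2 := norm_sub_norm_le (ψ t0) (ψ ((t0 + t0 - σ y) - γ))
    rw [← hc] at h2
    linarith
  have hTfne : Tf.Nonempty := by
    obtain ⟨y, hy, _⟩ := hbig 0
    exact ⟨y, hy⟩
  set m0 := Tf.card with hm0
  have hm0pos : 0 < m0 := Finset.card_pos.2 hTfne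
  have hm0pos' : (0:ℝ) < (m0 : ℝ) := by exact_mod_cast hm0pos
  have hεf : 0 < c^2 / (8 * (m0 : ℝ)) := by positivity
  obtain ⟨n, hne', hsum⟩ := ((eventually_nonempty hH).and (hstar _ hεf)).exists
  set W := H n with hWdef
  have hWpos : (0:ℝ) < (W.card : ℝ) := by
    exact_mod_cast Finset.card_pos.2 hne'
  set S : (Fin m → ℂ) → Finset Γ :=
    fun y => W.filter (fun γ => c/2 ≤ ‖ψ ((t0 + t0 - σ y) - γ)‖) with hS
  have hcover : W ⊆ Tf.biUnion S := by
    intro γ hγ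
    obtain ⟨y, hy, hbound⟩ := hbig γ
    exact Finset.mem_biUnion.2 ⟨y, hy, Finset.mem_filter.2 ⟨hγ, hbound⟩⟩
  have hcard : (W.card : ℝ) ≤ ∑ y ∈ Tf, ((S y).card : ℝ) := by
    have h1 := le_trans (Finset.card_le_card hcover) (Finset.card_biUnion_le)
    exact_mod_cast h1
  have hpig : ∃ y ∈ Tf, (W.card : ℝ) / (m0 : ℝ) ≤ ((S y).card : ℝ) := by
    by_contra hcon
    push_neg at hcon
    have h2 : ∑ y ∈ Tf, ((S y).card : ℝ) < ∑ _y ∈ Tf, (W.card : ℝ) / (m0 : ℝ) :=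
      Finset.sum_lt_sum_of_nonempty hTfne (fun y hy => hcon y hy)
    rw [Finset.sum_const, nsmul_eq_mul] at h2
    have h3 : ((m0 : ℝ)) * ((W.card : ℝ) / (m0 : ℝ)) = (W.card : ℝ) := by
      rw [mul_div_assoc']
      exact mul_div_cancel_left₀ _ (ne_of_gt hm0pos')
    rw [h3] at h2
    linarith
  obtain ⟨y, hyTf, hylarge⟩ := hpig
  set t := t0 + t0 - σ y with ht
  have hlow : (W.card : ℝ) / (m0 : ℝ) * ((c/2)^2) ≤ ∑ γ ∈ W, ‖ψ (t - γ)‖^2 := by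
    calc (W.card : ℝ) / (m0 : ℝ) * ((c/2)^2) ≤ ((S y).card : ℝ) * ((c/2)^2) :=
          mul_le_mul_of_nonneg_right hylarge (by positivity)
      _ ≤ ∑ γ ∈ S y, ‖ψ (t - γ)‖^2 := by
          have h4 : ∀ γ ∈ S y, (c/2)^2 ≤ ‖ψ (t - γ)‖^2 := by
            intro γ hγ
            have h5 := (Finset.mem_filter.1 hγ).2
            have h6 : (0:ℝ) ≤ c/2 := by positivity
            exact pow_le_pow_left₀ h6 h5 2
          have h7 := Finset.card_nsmul_le_sum (S y) (fun γ => ‖ψ (t - γ)‖^2) ((c/2)^2) h4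
          rw [nsmul_eq_mul] at h7
          exact h7
      _ ≤ ∑ γ ∈ W, ‖ψ (t - γ)‖^2 :=
          Finset.sum_le_sum_of_subset_of_nonneg (Finset.filter_subset _ _)
            (fun γ _ _ => by positivity)
  have hhigh := hsum t
  have hchain : (W.card : ℝ) / (m0 : ℝ) * ((c/2)^2) ≤ (W.card : ℝ) * (c^2 / (8 * (m0:ℝ))) :=
    le_trans hlow hhigh
  have e7 : (W.card : ℝ) / (m0 : ℝ) * ((c/2)^2) = (W.card : ℝ) * c^2 / (4 * (m0:ℝ)) := by
    ring
  have e8 : (W.card : ℝ) * (c^2 / (8 * (m0:ℝ))) = (W.card : ℝ) * c^2 / (8 * (m0:ℝ)) := by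
    ring
  rw [e7, e8] at hchain
  rw [div_le_div_iff₀ (by positivity) (by positivity)] at hchain
  have hd : 0 < (W.card : ℝ) * c^2 := mul_pos hWpos (pow_pos hcpos 2)
  nlinarith [hchain, hd, hm0pos']

end Main3

end APProof

/-- let `ρ : Γ → U(X)` be a unitary representation, `T_ρ` the twist
`(T_ρ f)(γ) = ρ(γ) f(γ)` and `π_{X,ρ}(γ) = T_ρ ∘ π_X(γ) ∘ T_ρ⁻¹`.  If the bounded
linear operator `C : ℓ∞(Γ, X) → ℓ∞(Γ, Y)` intertwines `π_{X,ρ}` and `π_Y`, then for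
`h ∈ AP(Γ, X)`, `C (T_ρ h) = 0` iff `C (T_ρ (χ ⊗ ĥ(χ))) = 0` for every character
`χ ∈ Γ̂`.  Here `ℓ∞(Γ, X)` is realised as `Γ →ᵇ X` for the discrete group `Γ`. -/
theorem twisted_intertwiner_vanishes_iff_vanishes_on_fourier_modes
    {Γ : Type*} [AddCommGroup Γ] [Countable Γ] [DecidableEq Γ]
    [TopologicalSpace Γ] [DiscreteTopology Γ]
    {X : Type*} [NormedAddCommGroup X] [InnerProductSpace ℂ X] [FiniteDimensional ℂ X]
    {Y : Type*} [NormedAddCommGroup Y] [InnerProductSpace ℂ Y] [FiniteDimensional ℂ Y]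
    (H : ℕ → Finset Γ) (hH : IsBohrBochner H)
    (ρ : Γ → (X ≃ₗᵢ[ℂ] X))
    (hρ : ∀ γ γ' : Γ, ∀ x : X, ρ (γ + γ') x = ρ γ (ρ γ' x))
    (C : (Γ →ᵇ X) →L[ℂ] (Γ →ᵇ Y))
    (hC : ∀ (γ : Γ) (f g : Γ →ᵇ X),
      (∀ γ' : Γ, g γ' = ρ γ' ((ρ (γ' - γ)).symm (f (γ' - γ)))) →
      ∀ γ'' : Γ, C g γ'' = C f (γ'' - γ))
    (h : Γ → X) (hAP : IsAP h)
    (fh : Γ →ᵇ X) (hfh : ∀ γ : Γ, fh γ = ρ γ (h γ)) :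
    C fh = 0 ↔
      ∀ (χ : Γ → ℂ) (b : X) (g : Γ →ᵇ X), IsChar χ →
        Tendsto
          (fun n => (((H n).card : ℂ))⁻¹ • ∑ γ ∈ H n, (starRingEnd ℂ) (χ γ) • h γ)
          atTop (nhds b) →
        (∀ γ : Γ, g γ = ρ γ (χ γ • b)) → C g = 0 := by
  classical
  constructor
  · intro hCfh χ b g hχ htend hg
    have key : ∀ ε : ℝ, 0 < ε → ‖C g‖ ≤ ‖C‖ * ε := by
      intro ε hε
      obtain ⟨n, gn, hgn, hCgn⟩ :=
        (APProof.mode_approx hH hC hAP hfh hχ htend hg hε).exists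
      have hCgn0 : C gn = 0 := by
        ext t
        rw [hCgn t, hCfh]
        simp
      have h0 : ‖C g‖ = ‖C (g - gn)‖ := by rw [map_sub, hCgn0, sub_zero]
      rw [h0]
      calc ‖C (g - gn)‖ ≤ ‖C‖ * ‖g - gn‖ := C.le_opNorm _
        _ ≤ ‖C‖ * ε := mul_le_mul_of_nonneg_left
            (by rw [norm_sub_rev]; exact hgn) (norm_nonneg C)
    have hle : ‖C g‖ ≤ 0 := by
      refine le_of_forall_pos_le_add (fun δ hδ => ?_)
      have h1 := key (δ / (‖C‖ + 1)) (by positivity)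
      have h2 : ‖C‖ * (δ / (‖C‖ + 1)) ≤ (‖C‖ + 1) * (δ / (‖C‖ + 1)) :=
        mul_le_mul_of_nonneg_right (by linarith [norm_nonneg C]) (by positivity)
      have h3 : (‖C‖ + 1) * (δ / (‖C‖ + 1)) = δ := by field_simp
      rw [zero_add]
      linarith
    exact norm_le_zero_iff.1 hle
  · intro hmodes
    have happrox : ∀ ε : ℝ, 0 < ε → ∃ (m : ℕ) (χk : Fin m → Γ → ℂ) (wk : Fin m → Y),
        (∀ k, IsChar (χk k)) ∧ ∀ t : Γ, ‖(C fh) t - ∑ k, χk k t • wk k‖ ≤ ε :=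
      fun ε hε => APProof.psi_trig_approx hC hAP hfh hε
    have hK : ∀ (χ : Γ → ℂ), IsChar χ → ∀ ε : ℝ, 0 < ε → ∀ᶠ n in atTop, ∀ t : Γ,
        ‖((H n).card : ℂ)⁻¹ • ∑ γ ∈ H n, χ γ • ((C fh) (t - γ))‖ ≤ ε :=
      fun χ hχ ε hε => APProof.Kpsi hH hC hAP hfh hmodes hχ hε
    have hstar : ∀ ε : ℝ, 0 < ε → ∀ᶠ n in atTop, ∀ t : Γ,
        ∑ γ ∈ H n, ‖(C fh) (t - γ)‖^2 ≤ ((H n).card : ℝ) * ε :=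
      fun ε hε => APProof.star_step happrox hK hε
    exact APProof.final_zero hH happrox hstar
end

section
/- Let 𝒢₀ = (G₀, m, φ, τ) be a Γ-gain framework. Then the RUM spectrum satisfies Ω(𝒢₀) = ∪_{g ∈ 𝒯(𝒢₀)} Λ(T_τ̃^{-1} g), the union of the Bohr–Fourier spectra of T_τ̃^{-1}g over all twisted almost periodic flexes g of 𝒢₀. Moreover, for every h ∈ AP(Γ, X^{V₀}) with T_τ̃ h ∈ 𝒯(𝒢₀) and every χ ∈ Γ̂, the χ-symmetric vector z(χ, ĥ(χ)) = T_τ̃(χ⊗ĥ(χ)) is a bounded infinitesimal flex of 𝒢₀. -/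
open Filter

/-- The orbit matrix `O_{𝒢₀}(χ)` of a `Γ`-gain framework. -/
def orbitMatrix {Γ X Y V₀ E₀ : Type*} [AddCommGroup Γ]
    [NormedAddCommGroup X] [InnerProductSpace ℂ X]
    [NormedAddCommGroup Y] [Module ℂ Y]
    (s r : E₀ → V₀) (m : E₀ → Γ) (φ : E₀ → (X →ₗ[ℂ] Y)) (U : Γ → (X ≃ₗᵢ[ℂ] X))
    (χ : Γ → ℂ) (x : V₀ → X) (e : E₀) : Y :=
  φ e (x (s e)) - χ (m e) • φ e (U (m e) (x (r e)))

/-- The gain framework operator `C̃(𝒢₀)`. -/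
def gainOp {Γ X Y V₀ E₀ : Type*} [AddCommGroup Γ]
    [NormedAddCommGroup X] [InnerProductSpace ℂ X]
    [NormedAddCommGroup Y] [Module ℂ Y]
    (s r : E₀ → V₀) (m : E₀ → Γ) (φ : E₀ → (X →ₗ[ℂ] Y)) (U : Γ → (X ≃ₗᵢ[ℂ] X))
    (f : Γ → V₀ → X) (γ : Γ) (e : E₀) : Y :=
  φ e (U (-γ) (f γ (s e) - f (γ + m e) (r e)))

lemma isAP_bounded {Γ X : Type*} [AddCommGroup Γ] [NormedAddCommGroup X] [NormedSpace ℂ X]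
    {h : Γ → X} (hAP : IsAP h) : ∃ C : ℝ, 0 ≤ C ∧ ∀ γ, ‖h γ‖ ≤ C := by
  obtain ⟨p, ⟨n, χs, a, hch, hp⟩, hclose⟩ := hAP 1 one_pos
  refine ⟨(∑ k, ‖a k‖) + 1, by positivity, fun γ => ?_⟩
  have h1 : ‖p γ‖ ≤ ∑ k, ‖a k‖ := by
    rw [hp γ]
    refine le_trans (norm_sum_le _ _) (Finset.sum_le_sum fun k _ => ?_)
    rw [norm_smul, (hch k).2 γ, one_mul]
  calc ‖h γ‖ = ‖(h γ - p γ) + p γ‖ := by rw [sub_add_cancel]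
    _ ≤ ‖h γ - p γ‖ + ‖p γ‖ := norm_add_le _ _
    _ ≤ 1 + ∑ k, ‖a k‖ := add_le_add (le_of_lt (hclose γ)) h1
    _ = (∑ k, ‖a k‖) + 1 := by ring

lemma isChar_mul_conj' {Γ : Type*} [AddCommGroup Γ] {χ : Γ → ℂ} (hχ : IsChar χ) (γ : Γ) :
    χ γ * (starRingEnd ℂ) (χ γ) = 1 := by
  rw [Complex.mul_conj]
  have : Complex.normSq (χ γ) = 1 := by
    rw [Complex.normSq_eq_norm_sq, hχ.2 γ]; norm_num
  rw [this]; norm_num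

section Key
variable {Γ : Type*} [AddCommGroup Γ] [DecidableEq Γ]
    {X : Type*} [NormedAddCommGroup X] [InnerProductSpace ℂ X] [FiniteDimensional ℂ X]
    {Y : Type*} [NormedAddCommGroup Y] [InnerProductSpace ℂ Y]
    {V₀ E₀ : Type*} [Fintype V₀]

lemma key_orbit (s r : E₀ → V₀) (m : E₀ → Γ) (φ : E₀ → (X →ₗ[ℂ] Y))
    (U : Γ → (X ≃ₗᵢ[ℂ] X))
    (hUadd : ∀ γ γ' : Γ, ∀ x : X, U (γ + γ') x = U γ (U γ' x))
    (hU0 : ∀ x : X, U 0 x = x)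
    (H : ℕ → Finset Γ) (hH : IsBohrBochner H)
    (h : Γ → V₀ → X) (hAP : IsAP h)
    (hflex : ∀ (γ : Γ) (e : E₀), gainOp s r m φ U (fun γ' v => U γ' (h γ' v)) γ e = 0)
    (χ : Γ → ℂ) (b : V₀ → X) (hχ : IsChar χ)
    (hb : Tendsto (fun n => (((H n).card : ℂ))⁻¹ • ∑ γ ∈ H n, (starRingEnd ℂ) (χ γ) • h γ)
      atTop (nhds b)) :
    ∀ e, orbitMatrix s r m φ U χ b e = 0 := by
  -- cancellation lemmas
  have hc1 : ∀ (γ : Γ) (a : X), U (-γ) (U γ a) = a := by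
    intro γ a
    rw [← hUadd, neg_add_cancel, hU0]
  have hc2 : ∀ (γ d : Γ) (a : X), U (-γ) (U (γ + d) a) = U d a := by
    intro γ d a
    rw [← hUadd, neg_add_cancel_left]
  intro e
  set d := m e with hd
  -- pointwise flex identity
  have hflex' : ∀ γ : Γ, φ e (h γ (s e)) = φ e (U d (h (γ + d) (r e))) := by
    intro γ
    have h0 := hflex γ e
    unfold gainOp at h0
    rw [map_sub (U (-γ)), hc1, hc2, map_sub (φ e), sub_eq_zero] at h0
    exact h0
  -- bound
  obtain ⟨C, hC0, hC⟩ := isAP_bounded hAP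
  set F : Γ → V₀ → X := fun γ => (starRingEnd ℂ) (χ γ) • h γ with hF
  have hFnorm : ∀ γ, ‖F γ‖ ≤ C := by
    intro γ
    rw [hF]
    simp only [norm_smul, RCLike.norm_conj, hχ.2 γ, one_mul]
    exact hC γ
  set A : ℕ → V₀ → X := fun n => (((H n).card : ℂ))⁻¹ • ∑ γ ∈ H n, F γ with hA
  set B : ℕ → V₀ → X :=
    fun n => (((H n).card : ℂ))⁻¹ • ∑ γ ∈ H n, (starRingEnd ℂ) (χ γ) • h (γ + d) with hB
  set T : ℕ → Finset Γ := fun n => (H n).image (fun x => d + x) with hT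
  have hinj : Function.Injective (fun x : Γ => d + x) := fun x y hxy => by
    simpa using hxy
  -- rewrite B
  have hsum : ∀ n, ∑ γ ∈ H n, (starRingEnd ℂ) (χ γ) • h (γ + d) = χ d • ∑ γ ∈ T n, F γ := by
    intro n
    rw [hT]
    rw [Finset.sum_image (fun x _ y _ hxy => hinj hxy), Finset.smul_sum]
    refine Finset.sum_congr rfl fun γ _ => ?_
    rw [hF]
    simp only
    rw [smul_smul, add_comm d γ]
    congr 1
    rw [hχ.1 γ d, map_mul, ← mul_assoc, mul_comm (χ d), mul_assoc,
      isChar_mul_conj' hχ d, mul_one]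
  have hBA : ∀ n, B n - χ d • A n
      = χ d • ((((H n).card : ℂ))⁻¹ • (∑ γ ∈ T n, F γ - ∑ γ ∈ H n, F γ)) := by
    intro n
    rw [hB, hA]
    simp only
    rw [hsum n, smul_comm ((((H n).card : ℂ))⁻¹) (χ d), smul_sub, smul_sub]
  -- cardinalities of symmetric differences
  have hT1 : ∀ n, (T n \ H n).card = ((H n).filter fun x => d + x ∉ H n).card := by
    intro n
    have : T n \ H n = ((H n).filter fun x => d + x ∉ H n).image (fun x => d + x) := by
      ext y
      simp only [hT, Finset.mem_sdiff, Finset.mem_image, Finset.mem_filter]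
      constructor
      · rintro ⟨⟨x, hx, rfl⟩, hy⟩
        exact ⟨x, ⟨hx, hy⟩, rfl⟩
      · rintro ⟨x, ⟨hx, hnx⟩, rfl⟩
        exact ⟨⟨x, hx, rfl⟩, hnx⟩
    rw [this, Finset.card_image_of_injective _ hinj]
  have hT2 : ∀ n, (H n \ T n).card = ((H n).filter fun x => -d + x ∉ H n).card := by
    intro n
    have : H n \ T n = (H n).filter fun y => -d + y ∉ H n := by
      ext y
      simp only [hT, Finset.mem_sdiff, Finset.mem_image, Finset.mem_filter]
      constructor
      · rintro ⟨hy, hny⟩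
        refine ⟨hy, fun hc => hny ⟨-d + y, hc, by abel⟩⟩
      · rintro ⟨hy, hny⟩
        refine ⟨hy, fun ⟨x, hx, hxy⟩ => hny ?_⟩
        have : x = -d + y := by rw [← hxy]; abel
        rwa [← this]
    rw [this]
  -- norm estimate
  have hest : ∀ n, ‖B n - χ d • A n‖ ≤
      (((H n).filter fun x => d + x ∉ H n).card : ℝ) / ((H n).card : ℝ) * C
      + (((H n).filter fun x => -d + x ∉ H n).card : ℝ) / ((H n).card : ℝ) * C := by
    intro n
    rw [hBA n, norm_smul, hχ.2 d, one_mul, norm_smul]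
    have hdiff : ∑ γ ∈ T n, F γ - ∑ γ ∈ H n, F γ
        = ∑ γ ∈ T n \ H n, F γ - ∑ γ ∈ H n \ T n, F γ :=
      (Finset.sum_sdiff_sub_sum_sdiff).symm
    have hnormsum : ∀ S : Finset Γ, ‖∑ γ ∈ S, F γ‖ ≤ (S.card : ℝ) * C := by
      intro S
      refine le_trans (norm_sum_le _ _) ?_
      calc ∑ γ ∈ S, ‖F γ‖ ≤ ∑ _γ ∈ S, C := Finset.sum_le_sum fun γ _ => hFnorm γ
        _ = (S.card : ℝ) * C := by rw [Finset.sum_const, nsmul_eq_mul]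
    have hnorm2 : ‖∑ γ ∈ T n, F γ - ∑ γ ∈ H n, F γ‖
        ≤ ((T n \ H n).card : ℝ) * C + ((H n \ T n).card : ℝ) * C := by
      rw [hdiff]
      exact le_trans (norm_sub_le _ _) (add_le_add (hnormsum _) (hnormsum _))
    have hcinv : ‖(((H n).card : ℂ))⁻¹‖ = (((H n).card : ℝ))⁻¹ := by
      rw [norm_inv, Complex.norm_natCast]
    rw [hcinv]
    calc (((H n).card : ℝ))⁻¹ * ‖∑ γ ∈ T n, F γ - ∑ γ ∈ H n, F γ‖
        ≤ (((H n).card : ℝ))⁻¹ * (((T n \ H n).card : ℝ) * C + ((H n \ T n).card : ℝ) * C) :=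
          mul_le_mul_of_nonneg_left hnorm2 (by positivity)
      _ = _ := by rw [hT1 n, hT2 n]; ring
  -- limit of B
  have hzero : Tendsto (fun n => B n - χ d • A n) atTop (nhds 0) := by
    apply squeeze_zero_norm hest
    have h1 := (hH.2.2 d).mul_const C
    have h2 := (hH.2.2 (-d)).mul_const C
    rw [zero_mul] at h1 h2
    simpa using h1.add h2
  have hBlim : Tendsto B atTop (nhds (χ d • b)) := by
    have := hzero.add (hb.const_smul (χ d))
    rw [zero_add] at this
    refine this.congr fun n => by abel
  -- continuous linear maps
  let L₁ : (V₀ → X) →ₗ[ℂ] Y := (φ e).comp (LinearMap.proj (s e))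
  let L₂ : (V₀ → X) →ₗ[ℂ] Y :=
    ((φ e).comp (U d).toLinearEquiv.toLinearMap).comp (LinearMap.proj (r e))
  have hL1c : Continuous L₁ := L₁.continuous_of_finiteDimensional
  have hL2c : Continuous L₂ := L₂.continuous_of_finiteDimensional
  have hLAB : ∀ n, L₁ (A n) = L₂ (B n) := by
    intro n
    rw [hA, hB]
    simp only
    rw [map_smul, map_smul, map_sum, map_sum]
    congr 1
    refine Finset.sum_congr rfl fun γ _ => ?_
    have hfl : L₁ (h γ) = L₂ (h (γ + d)) := hflex' γ
    rw [hF]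
    simp only
    rw [map_smul, map_smul, hfl]
  have hlim1 : Tendsto (fun n => L₁ (A n)) atTop (nhds (L₁ b)) :=
    (hL1c.tendsto b).comp hb
  have hlim2 : Tendsto (fun n => L₂ (B n)) atTop (nhds (L₂ (χ d • b))) :=
    (hL2c.tendsto _).comp hBlim
  have hfinal : L₁ b = L₂ (χ d • b) :=
    tendsto_nhds_unique ((tendsto_congr hLAB).mp hlim1) hlim2
  unfold orbitMatrix
  rw [← hd]
  have : L₂ (χ d • b) = χ d • L₂ b := map_smul _ _ _
  rw [this] at hfinal
  rw [sub_eq_zero]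
  exact hfinal
end Key

lemma isChar_conj_mul {Γ : Type*} [AddCommGroup Γ] {χ : Γ → ℂ} (hχ : IsChar χ) (γ : Γ) :
    (starRingEnd ℂ) (χ γ) * χ γ = 1 := by
  rw [mul_comm]; exact isChar_mul_conj' hχ γ

section Uprops
variable {Γ : Type*} [AddCommGroup Γ]
    {X : Type*} [NormedAddCommGroup X] [InnerProductSpace ℂ X]
    (τ : Γ → (X ≃ᵃⁱ[ℂ] X))
    (hτ : ∀ γ γ' : Γ, ∀ x : X, τ (γ + γ') x = τ γ (τ γ' x))
    (U : Γ → (X ≃ₗᵢ[ℂ] X)) (hU : ∀ γ x, U γ x = τ γ x - τ γ 0)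

include hτ hU in
lemma U_zero : ∀ x : X, U 0 x = x := by
  have hfix : ∀ x : X, x = τ 0 x := by
    intro x
    have h1 : τ 0 x = τ 0 (τ 0 x) := by have := hτ 0 0 x; rwa [add_zero] at this
    exact (τ 0).injective h1
  intro x
  rw [hU, ← hfix x, ← hfix 0, sub_zero]

include hτ hU in
lemma U_add : ∀ γ γ' : Γ, ∀ x : X, U (γ + γ') x = U γ (U γ' x) := by
  intro γ γ' x
  have h1 : U γ (U γ' x) = U γ (τ γ' x) - U γ (τ γ' 0) := by
    rw [hU γ' x]; exact map_sub (U γ) _ _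
  rw [h1, hU γ (τ γ' x), hU γ (τ γ' 0), hU (γ + γ'), hτ γ γ' x, hτ γ γ' 0]
  abel
end Uprops

section Main
variable {Γ : Type*} [AddCommGroup Γ] [DecidableEq Γ]
    {X : Type*} [NormedAddCommGroup X] [InnerProductSpace ℂ X] [FiniteDimensional ℂ X]
    {Y : Type*} [NormedAddCommGroup Y] [InnerProductSpace ℂ Y]
    {V₀ E₀ : Type*} [Fintype V₀]

/-- If the orbit matrix annihilates `x`, then `γ ↦ χ γ • x` gives a flex. -/
lemma gainOp_char_smul (s r : E₀ → V₀) (m : E₀ → Γ) (φ : E₀ → (X →ₗ[ℂ] Y))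
    (U : Γ → (X ≃ₗᵢ[ℂ] X))
    (hUadd : ∀ γ γ' : Γ, ∀ x : X, U (γ + γ') x = U γ (U γ' x))
    (hU0 : ∀ x : X, U 0 x = x)
    {χ : Γ → ℂ} (hχ : IsChar χ) (x : V₀ → X)
    (hox : ∀ e, orbitMatrix s r m φ U χ x e = 0) :
    ∀ (γ : Γ) (e : E₀), gainOp s r m φ U (fun γ' v => U γ' (χ γ' • x v)) γ e = 0 := by
  have hc1 : ∀ (γ : Γ) (a : X), U (-γ) (U γ a) = a := by
    intro γ a; rw [← hUadd, neg_add_cancel, hU0]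
  have hc2 : ∀ (γ d : Γ) (a : X), U (-γ) (U (γ + d) a) = U d a := by
    intro γ d a; rw [← hUadd, neg_add_cancel_left]
  intro γ e
  unfold gainOp
  rw [map_sub (U (-γ)), hc1, hc2]
  have hkey : χ γ • x (s e) - U (m e) (χ (γ + m e) • x (r e))
      = χ γ • (x (s e) - χ (m e) • U (m e) (x (r e))) := by
    rw [map_smul, hχ.1 γ (m e), smul_sub, smul_smul]
  rw [hkey, map_smul]
  have := hox e
  unfold orbitMatrix at this
  rw [map_sub (φ e), map_smul (φ e)] at *
  rw [this, smul_zero]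
end Main

/-- the RUM spectrum `Ω(𝒢₀)` equals the union of the Bohr–Fourier
spectra `Λ(T_τ̃⁻¹ g)` over all twisted almost periodic flexes `g = T_τ̃ h` of `𝒢₀`;
moreover for every twisted almost periodic flex `T_τ̃ h` and every character `χ`,
the `χ`-symmetric vector `z(χ, ĥ(χ)) = T_τ̃ (χ ⊗ ĥ(χ))` is a bounded infinitesimal
flex of `𝒢₀`. -/
theorem RUMspectrum_eq_union_bohrFourier
    {Γ : Type*} [AddCommGroup Γ] [AddGroup.FG Γ] [Countable Γ] [DecidableEq Γ]
    {X : Type*} [NormedAddCommGroup X] [InnerProductSpace ℂ X] [FiniteDimensional ℂ X]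
    {Y : Type*} [NormedAddCommGroup Y] [InnerProductSpace ℂ Y] [FiniteDimensional ℂ Y]
    {V₀ E₀ : Type*} [Fintype V₀] [Fintype E₀]
    (s r : E₀ → V₀) (m : E₀ → Γ) (φ : E₀ → (X →ₗ[ℂ] Y))
    (τ : Γ → (X ≃ᵃⁱ[ℂ] X))
    (hτ : ∀ γ γ' : Γ, ∀ x : X, τ (γ + γ') x = τ γ (τ γ' x))
    (U : Γ → (X ≃ₗᵢ[ℂ] X)) (hU : ∀ γ x, U γ x = τ γ x - τ γ 0)
    (H : ℕ → Finset Γ) (hH : IsBohrBochner H) :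
    ({χ : Γ → ℂ | IsChar χ ∧ ∃ x : V₀ → X, x ≠ 0 ∧
        ∀ e, orbitMatrix s r m φ U χ x e = 0} =
      {χ : Γ → ℂ | IsChar χ ∧ ∃ h : Γ → V₀ → X, IsAP h ∧
        (∀ (γ : Γ) (e : E₀),
          gainOp s r m φ U (fun γ' v => U γ' (h γ' v)) γ e = 0) ∧
        ∃ b : V₀ → X, b ≠ 0 ∧
          Tendsto
            (fun n => (((H n).card : ℂ))⁻¹ • ∑ γ ∈ H n, (starRingEnd ℂ) (χ γ) • h γ)
            atTop (nhds b)}) ∧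
      ∀ h : Γ → V₀ → X, IsAP h →
        (∀ (γ : Γ) (e : E₀),
          gainOp s r m φ U (fun γ' v => U γ' (h γ' v)) γ e = 0) →
        ∀ (χ : Γ → ℂ) (b : V₀ → X), IsChar χ →
          Tendsto
            (fun n => (((H n).card : ℂ))⁻¹ • ∑ γ ∈ H n, (starRingEnd ℂ) (χ γ) • h γ)
            atTop (nhds b) →
          ∀ (γ : Γ) (e : E₀),
            gainOp s r m φ U (fun γ' v => U γ' (χ γ' • b v)) γ e = 0 := by

  have hU0 : ∀ x : X, U 0 x = x := U_zero τ hτ U hU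
  have hUadd : ∀ γ γ' : Γ, ∀ x : X, U (γ + γ') x = U γ (U γ' x) := U_add τ hτ U hU
  constructor
  · ext χ
    simp only [Set.mem_setOf_eq]
    constructor
    · rintro ⟨hχ, x, hx0, hox⟩
      refine ⟨hχ, fun γ => χ γ • x, ?_, ?_, x, hx0, ?_⟩
      · -- IsAP
        intro ε hε
        refine ⟨fun γ => χ γ • x, ⟨1, fun _ => χ, fun _ => x, fun _ => hχ, fun γ => ?_⟩,
          fun γ => by simpa using hε⟩
        simp
      · -- flex
        exact gainOp_char_smul s r m φ U hUadd hU0 hχ x hox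
      · -- Fourier coefficient
        have hterm : ∀ γ : Γ, (starRingEnd ℂ) (χ γ) • (χ γ • x) = x := by
          intro γ
          rw [smul_smul, isChar_conj_mul hχ γ, one_smul]
        obtain ⟨n₀, hn₀⟩ := hH.2.1 0
        have hev : ∀ n ≥ n₀,
            ((((H n).card : ℂ))⁻¹ • ∑ γ ∈ H n, (starRingEnd ℂ) (χ γ) • (χ γ • x)) = x := by
          intro n hn
          have hne : (H n).Nonempty := ⟨0, hH.1 hn hn₀⟩
          have hcard : ((H n).card : ℂ) ≠ 0 := by
            simp [Finset.card_ne_zero_of_mem (hne.choose_spec)]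
          rw [Finset.sum_congr rfl fun γ _ => hterm γ, Finset.sum_const,
            ← Nat.cast_smul_eq_nsmul ℂ, smul_smul, inv_mul_cancel₀ hcard, one_smul]
        refine Tendsto.congr' ?_ (tendsto_const_nhds (x := x))
        filter_upwards [eventually_ge_atTop n₀] with n hn
        exact (hev n hn).symm
    · rintro ⟨hχ, h, hAP, hflex, b, hb0, hlim⟩
      exact ⟨hχ, b, hb0, key_orbit s r m φ U hUadd hU0 H hH h hAP hflex χ b hχ hlim⟩
  · intro h hAP hflex χ b hχ hlim
    exact gainOp_char_smul s r m φ U hUadd hU0 hχ b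
      (key_orbit s r m φ U hUadd hU0 H hH h hAP hflex χ b hχ hlim)
end
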